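/- Let π : Σ* → G be a choice of generators for a group G, let # be a letter not in Σ, let W = {w ∈ Σ* : π(w) = 1} be the word problem of G, and let M = {u#v#w : u, v, w ∈ Σ*, π(u)π(v)π(w) = 1} be the multiplication table corresponding to the combing R = Σ*. Then M is a regular language over Σ ∪ {#} if and only if W is a regular language over Σ. -/

import Mathlib

/-- The image in `G` of a word over the generating alphabet, for the monoid homomorphism
`Σ* → G` determined by the letter map `φ`. -/
def wordProd {S G : Type} [Group G] (φ : S → G) (w : List S) : G :=
  (w.map φ).prod

/-- The word metric `d(g,h) = min {|w| : π(w) = g⁻¹h}` on `G`. -/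
noncomputable def wdist {S G : Type} [Group G] (φ : S → G) (g h : G) : ℕ :=
  sInf {n : ℕ | ∃ w : List S, wordProd φ w = g⁻¹ * h ∧ w.length = n}

/-- The set of points of the path determined by the word `w` based at `g`. -/
def pathPoints {S G : Type} [Group G] (φ : S → G) (g : G) (w : List S) : Set G :=
  {x | ∃ i ≤ w.length, x = g * wordProd φ (w.take i)}

/-- A combing: a language projecting onto `G`. -/
def IsCombing {S G : Type} [Group G] (φ : S → G) (R : Language S) : Prop :=
  ∀ g : G, ∃ w ∈ R, wordProd φ w = g

/-- The word `u#v#w` over `Σ ∪ {#}`, where the letter `#` is modelled by `none`. -/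
def hashWord {S : Type} (u v w : List S) : List (Option S) :=
  u.map some ++ [none] ++ v.map some ++ [none] ++ w.map some

/-- The multiplication table `{u#v#w : u,v,w ∈ R, π(u)π(v)π(w) = 1}` determined by
the combing `R`. -/
def multTable {S G : Type} [Group G] (φ : S → G) (R : Language S) : Language (Option S) :=
  {z | ∃ u ∈ R, ∃ v ∈ R, ∃ w ∈ R,
    wordProd φ u * wordProd φ v * wordProd φ w = 1 ∧ z = hashWord u v w}

/-! ### Auxiliary material -/

/-- Number of occurrences of `#` (i.e. `none`) in a word over `Σ ∪ {#}`. -/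
def noneCount {S : Type} : List (Option S) → ℕ
  | [] => 0
  | none :: t => noneCount t + 1
  | some _ :: t => noneCount t

@[simp] lemma noneCount_nil {S : Type} : noneCount ([] : List (Option S)) = 0 := rfl
@[simp] lemma noneCount_none {S : Type} (t : List (Option S)) :
    noneCount (none :: t) = noneCount t + 1 := rfl
@[simp] lemma noneCount_some {S : Type} (b : S) (t : List (Option S)) :
    noneCount (some b :: t) = noneCount t := rfl

@[simp] lemma noneCount_append {S : Type} (x y : List (Option S)) :
    noneCount (x ++ y) = noneCount x + noneCount y := by
  induction x with
  | nil => simp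
  | cons a t ih => match a with
    | none => simp [ih]; omega
    | some b => simp [ih]

@[simp] lemma noneCount_map_some {S : Type} (u : List S) :
    noneCount (u.map some) = 0 := by
  induction u with
  | nil => rfl
  | cons a t ih => simp [ih]

@[simp] lemma filterMap_id_map_some {S : Type} (u : List S) :
    (u.map some).filterMap id = u := by
  simp [List.filterMap_map]

lemma decomp0 {S : Type} (z : List (Option S)) (h : noneCount z = 0) :
    ∃ w : List S, z = w.map some := by
  induction z with
  | nil => exact ⟨[], rfl⟩
  | cons a t ih =>
    match a with
    | none => simp at h
    | some b =>
      simp at h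
      obtain ⟨w, rfl⟩ := ih h
      exact ⟨b :: w, rfl⟩

lemma decomp1 {S : Type} (z : List (Option S)) (h : noneCount z = 1) :
    ∃ v w : List S, z = v.map some ++ [none] ++ w.map some := by
  induction z with
  | nil => simp at h
  | cons a t ih =>
    match a with
    | none =>
      simp at h
      obtain ⟨w, rfl⟩ := decomp0 t h
      exact ⟨[], w, rfl⟩
    | some b =>
      simp at h
      obtain ⟨v, w, rfl⟩ := ih h
      exact ⟨b :: v, w, rfl⟩

lemma decomp2 {S : Type} (z : List (Option S)) (h : noneCount z = 2) :
    ∃ u v w : List S, z = hashWord u v w := by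
  induction z with
  | nil => simp at h
  | cons a t ih =>
    match a with
    | none =>
      simp at h
      obtain ⟨v, w, rfl⟩ := decomp1 t h
      exact ⟨[], v, w, by simp [hashWord]⟩
    | some b =>
      simp at h
      obtain ⟨u, v, w, rfl⟩ := ih h
      exact ⟨b :: u, v, w, by simp [hashWord]⟩

lemma wordProd_append {S G : Type} [Group G] (φ : S → G) (u v : List S) :
    wordProd φ (u ++ v) = wordProd φ u * wordProd φ v := by
  simp [wordProd]

/-- The multiplication table for `R = Σ*` consists exactly of the words with two `#`s
whose hash-free part lies in the word problem. -/
lemma multTable_eq {S G : Type} [Group G] (φ : S → G) :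
    multTable φ (Set.univ : Language S) =
      {z | noneCount z = 2 ∧ wordProd φ (z.filterMap id) = 1} := by
  ext z
  constructor
  · rintro ⟨u, -, v, -, w, -, hp, rfl⟩
    refine ⟨by simp [hashWord, noneCount], ?_⟩
    simp only [hashWord, List.filterMap_append, filterMap_id_map_some]
    simp only [show ([none] : List (Option S)).filterMap id = [] from rfl]
    simp only [wordProd_append, mul_assoc] at hp ⊢
    simpa [show wordProd φ ([] : List S) = 1 from rfl] using hp
  · rintro ⟨hc, hp⟩
    obtain ⟨u, v, w, rfl⟩ := decomp2 z hc
    refine ⟨u, trivial, v, trivial, w, trivial, ?_, rfl⟩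
    simp only [hashWord, List.filterMap_append, filterMap_id_map_some] at hp
    simp only [show ([none] : List (Option S)).filterMap id = [] from rfl] at hp
    simp only [wordProd_append, mul_assoc] at hp ⊢
    simpa [show wordProd φ ([] : List S) = 1 from rfl] using hp

/-- Transition function of the DFA for the multiplication table: track the state of the
word-problem DFA plus the number of `#`s seen so far (dead state `none` after a third `#`). -/
def tripleStep {S σ : Type} (D : DFA S σ) :
    Option (σ × Fin 3) → Option S → Option (σ × Fin 3)
  | none, _ => none
  | some (s, k), some b => some (D.step s b, k)
  | some (s, k), none =>
      if h : (k : ℕ) < 2 then some (s, ⟨(k : ℕ) + 1, by omega⟩) else none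

@[simp] lemma tripleStep_none {S σ : Type} (D : DFA S σ) (a : Option S) :
    tripleStep D none a = none := rfl
@[simp] lemma tripleStep_some_some {S σ : Type} (D : DFA S σ) (s : σ) (k : Fin 3) (b : S) :
    tripleStep D (some (s, k)) (some b) = some (D.step s b, k) := rfl
@[simp] lemma tripleStep_some_none {S σ : Type} (D : DFA S σ) (s : σ) (k : Fin 3) :
    tripleStep D (some (s, k)) none =
      if h : (k : ℕ) < 2 then some (s, ⟨(k : ℕ) + 1, by omega⟩) else none := rfl

/-- The DFA for the multiplication table built from a DFA for the word problem. -/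
def tripleDFA {S σ : Type} (D : DFA S σ) : DFA (Option S) (Option (σ × Fin 3)) where
  step := tripleStep D
  start := some (D.start, 0)
  accept := {x | ∃ s ∈ D.accept, x = some (s, (2 : Fin 3))}

lemma tripleDFA_evalFrom_dead {S σ : Type} (D : DFA S σ) (z : List (Option S)) :
    (tripleDFA D).evalFrom none z = none := by
  induction z with
  | nil => rfl
  | cons a t ih =>
    show (tripleDFA D).evalFrom (tripleStep D none a) t = none
    simpa using ih

lemma tripleDFA_evalFrom {S σ : Type} (D : DFA S σ) (z : List (Option S)) :
    ∀ (s : σ) (k : Fin 3),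
    (tripleDFA D).evalFrom (some (s, k)) z =
      if h : (k : ℕ) + noneCount z ≤ 2 then
        some (D.evalFrom s (z.filterMap id), ⟨(k : ℕ) + noneCount z, by omega⟩)
      else none := by
  induction z with
  | nil =>
    intro s k
    have hk := k.isLt
    rw [dif_pos (by simp; omega)]
    simp only [DFA.evalFrom_nil, List.filterMap_nil, Option.some_inj, Prod.mk.injEq]
    exact ⟨trivial, Fin.ext (by simp)⟩
  | cons a t ih =>
    intro s k
    match a with
    | some b =>
      show (tripleDFA D).evalFrom (tripleStep D (some (s, k)) (some b)) t = _
      rw [tripleStep_some_some, ih (D.step s b) k]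
      rfl
    | none =>
      show (tripleDFA D).evalFrom (tripleStep D (some (s, k)) none) t = _
      rw [tripleStep_some_none]
      by_cases h : (k : ℕ) < 2
      · rw [dif_pos h, ih s ⟨(k : ℕ) + 1, by omega⟩]
        by_cases h2 : (k : ℕ) + 1 + noneCount t ≤ 2
        · rw [dif_pos h2, dif_pos (by simpa using (by omega : (k : ℕ) + (noneCount t + 1) ≤ 2))]
          simp only [List.filterMap_cons, Option.some_inj, Prod.mk.injEq]
          exact ⟨rfl, Fin.ext (by simp; omega)⟩
        · rw [dif_neg h2, dif_neg (by simp; omega)]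
      · rw [dif_neg h, tripleDFA_evalFrom_dead, dif_neg (by simp; omega)]

/-- The multiplication table corresponding to the combing `R = Σ*` is
regular iff the word problem `W = {w : π(w) = 1}` is regular. -/
theorem multTable_regular_iff_wordProblem_regular {S G : Type} [Fintype S] [Group G]
    (inv : S → S) (hinv_inv : ∀ a, inv (inv a) = a) (hinv_ne : ∀ a, inv a ≠ a)
    (φ : S → G) (hsurj : Function.Surjective (wordProd φ))
    (hφinv : ∀ a, φ (inv a) = (φ a)⁻¹) :
    (multTable φ (Set.univ : Language S)).IsRegular ↔
      Language.IsRegular {w : List S | wordProd φ w = 1} := by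
  rw [multTable_eq]
  constructor
  · rintro ⟨σ, _, D, hD⟩
    refine ⟨σ, ‹_›, ⟨fun s a => D.step s (some a), D.start,
      {s | D.evalFrom s [none, none] ∈ D.accept}⟩, ?_⟩
    ext w
    have hev : ∀ (s : σ) (x : List S),
        DFA.evalFrom ⟨fun s a => D.step s (some a), D.start,
          {s | D.evalFrom s [none, none] ∈ D.accept}⟩ s x = D.evalFrom s (x.map some) := by
      intro s x
      simp [DFA.evalFrom, List.foldl_map]
    have : w ∈ (⟨fun s a => D.step s (some a), D.start,
        {s | D.evalFrom s [none, none] ∈ D.accept}⟩ : DFA S σ).accepts ↔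
        (w.map some ++ [none, none]) ∈ D.accepts := by
      rw [DFA.mem_accepts, DFA.mem_accepts, DFA.eval, DFA.eval, hev,
        D.evalFrom_of_append]
      rfl
    show _ ↔ wordProd φ w = 1
    rw [this, hD]
    constructor
    · rintro ⟨-, hp⟩
      simpa using hp
    · intro hp
      exact ⟨by simp, by simpa using hp⟩
  · rintro ⟨σ, _, D, hD⟩
    refine ⟨Option (σ × Fin 3), inferInstance, tripleDFA D, ?_⟩
    ext z
    rw [DFA.mem_accepts, DFA.eval]
    show (tripleDFA D).evalFrom (some (D.start, 0)) z ∈ (tripleDFA D).accept ↔ _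
    rw [tripleDFA_evalFrom]
    by_cases h : (0 : Fin 3).val + noneCount z ≤ 2
    · rw [dif_pos h]
      constructor
      · rintro ⟨s, hs, heq⟩
        rw [Option.some_inj, Prod.mk.injEq] at heq
        have hk : noneCount z = 2 := by
          have := congrArg Fin.val heq.2
          simpa [show ((2 : Fin 3) : ℕ) = 2 from rfl] using this
        refine ⟨hk, ?_⟩
        have : z.filterMap id ∈ D.accepts := by
          rw [DFA.mem_accepts, DFA.eval]; rw [heq.1]; exact hs
        rw [hD] at this; exact this
      · rintro ⟨hk, hp⟩
        refine ⟨D.evalFrom D.start (z.filterMap id), ?_, ?_⟩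
        · have : z.filterMap id ∈ D.accepts := by rw [hD]; exact hp
          exact this
        · rw [Option.some_inj, Prod.mk.injEq]
          exact ⟨rfl, Fin.ext (by simp [hk, show ((2 : Fin 3) : ℕ) = 2 from rfl])⟩
    · rw [dif_neg h]
      constructor
      · rintro ⟨s, hs, heq⟩; exact absurd heq (by simp)
      · rintro ⟨hk, -⟩; exact absurd h (by simp [hk])
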